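/- Assume λ₂ = 0 and define a_n = k_n/k̂_{n-1}. Then for all n ≥ 1, c_{n+2} c_{n+1} / a_{n+2} + a_n = c_{n+1} + c_n, where c_n are the Freud recurrence coefficients. -/

import Mathlib

open Polynomial MeasureTheory Filter Topology

/-- The Freud inner product `⟨f,g⟩_F = ∫_ℝ f(x) g(x) e^{-x⁴} dx`. -/
noncomputable def innerF (f g : Polynomial ℝ) : ℝ :=
  ∫ x : ℝ, f.eval x * g.eval x * Real.exp (-x ^ 4)


/-- The Sobolev inner product
`⟨f,g⟩_S = ⟨f,g⟩_F + λ₁ f(0) g(0) + λ₂ f'(0) g'(0)`. -/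
noncomputable def innerS (l1 l2 : ℝ) (f g : Polynomial ℝ) : ℝ :=
  innerF f g + l1 * f.eval 0 * g.eval 0
    + l2 * (Polynomial.derivative f).eval 0 * (Polynomial.derivative g).eval 0

section SobolevFreudAux
open Set Real


lemma integrable_abs_pow_exp (n : ℕ) :
    Integrable fun x : ℝ => |x| ^ n * Real.exp (-x ^ 4) := by
  have key : IntegrableOn (fun x : ℝ => |x| ^ n * Real.exp (-x ^ 4)) (Ioi 0) := by
    have h := integrableOn_rpow_mul_exp_neg_rpow (p := 4) (s := n)
      (by exact_mod_cast neg_one_lt_zero.trans_le n.cast_nonneg) (by norm_num)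
    apply h.congr_fun ?_ measurableSet_Ioi
    intro x hx
    have hx' : (0:ℝ) < x := hx
    simp only []
    rw [abs_of_pos hx', ← Real.rpow_natCast x n, ← Real.rpow_natCast x 4]
    norm_num
  have meas : AEStronglyMeasurable (fun x : ℝ => |x| ^ n * Real.exp (-x ^ 4)) volume := by
    apply Continuous.aestronglyMeasurable
    continuity
  rw [← integrableOn_univ, ← Iio_union_Ici (a := (0:ℝ)), integrableOn_union,
    integrableOn_Ici_iff_integrableOn_Ioi]
  refine ⟨?_, key⟩
  rw [← (Measure.measurePreserving_neg (volume : Measure ℝ)).integrableOn_comp_preimage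
      (Homeomorph.neg ℝ).measurableEmbedding]
  simp only [Function.comp_def, neg_preimage, neg_Iio, neg_neg, neg_zero, abs_neg]
  have : ∀ x : ℝ, (-x) ^ 4 = x ^ 4 := fun x => by ring
  simpa [this] using key

lemma integrable_pow_exp (n : ℕ) :
    Integrable fun x : ℝ => x ^ n * Real.exp (-x ^ 4) := by
  refine (integrable_abs_pow_exp n).mono' ?_ ?_
  · exact (Continuous.aestronglyMeasurable (by continuity))
  · filter_upwards with x
    simp only [norm_mul, norm_pow, Real.norm_eq_abs, abs_exp]
    exact le_refl _

lemma integrable_eval_exp (f : Polynomial ℝ) :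
    Integrable fun x : ℝ => f.eval x * Real.exp (-x ^ 4) := by
  induction f using Polynomial.induction_on' with
  | add p q hp hq =>
    have := hp.add hq
    refine this.congr ?_
    filter_upwards with x; simp; ring
  | monomial n c =>
    have := (integrable_pow_exp n).const_mul c
    refine this.congr ?_
    filter_upwards with x; simp [mul_assoc]


lemma innerF_eq (f g : Polynomial ℝ) :
    innerF f g = ∫ x : ℝ, (f * g).eval x * Real.exp (-x ^ 4) := by
  unfold innerF; congr 1; funext x; simp

lemma innerF_comm (f g : Polynomial ℝ) : innerF f g = innerF g f := by
  rw [innerF_eq, innerF_eq, mul_comm]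

lemma innerF_zero_right (f : Polynomial ℝ) : innerF f 0 = 0 := by
  unfold innerF; simp

lemma innerF_add_right (f g h : Polynomial ℝ) :
    innerF f (g + h) = innerF f g + innerF f h := by
  rw [innerF_eq, innerF_eq, innerF_eq, ← integral_add]
  · congr 1; funext x; simp; ring
  · exact integrable_eval_exp _
  · exact integrable_eval_exp _

lemma innerF_Cmul_right (f : Polynomial ℝ) (r : ℝ) (g : Polynomial ℝ) :
    innerF f (C r * g) = r * innerF f g := by
  rw [innerF_eq, innerF_eq, ← integral_const_mul]
  congr 1; funext x; simp; ring

lemma innerF_add_left (f g h : Polynomial ℝ) :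
    innerF (f + g) h = innerF f h + innerF g h := by
  rw [innerF_comm, innerF_add_right, innerF_comm h f, innerF_comm h g]

lemma innerF_Cmul_left (r : ℝ) (f g : Polynomial ℝ) :
    innerF (C r * f) g = r * innerF f g := by
  rw [innerF_comm, innerF_Cmul_right, innerF_comm]

lemma innerF_mul_assoc (f g h : Polynomial ℝ) :
    innerF (f * g) h = innerF f (g * h) := by
  rw [innerF_eq, innerF_eq, mul_assoc]

lemma innerF_sum_right (f : Polynomial ℝ) (s : Finset ℕ) (g : ℕ → Polynomial ℝ) :
    innerF f (∑ i ∈ s, g i) = ∑ i ∈ s, innerF f (g i) := by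
  induction s using Finset.induction_on with
  | empty => simp [innerF_zero_right]
  | insert a s hi ih => rw [Finset.sum_insert hi, innerF_add_right, ih,
      Finset.sum_insert hi]

lemma innerF_self_nonneg (f : Polynomial ℝ) : 0 ≤ innerF f f := by
  unfold innerF
  apply integral_nonneg
  intro x
  simp only [Pi.zero_apply]
  nlinarith [mul_self_nonneg (f.eval x), Real.exp_pos (-x ^ 4)]

lemma innerF_self_pos {f : Polynomial ℝ} (hf : f ≠ 0) : 0 < innerF f f := by
  unfold innerF
  rw [integral_pos_iff_support_of_nonneg]
  · have hsub : {x : ℝ | ¬ f.IsRoot x} ⊆ Function.support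
        (fun x : ℝ => f.eval x * f.eval x * Real.exp (-x ^ 4)) := by
      intro x hx
      simp only [Function.mem_support]
      have hx' : f.eval x ≠ 0 := hx
      positivity
    have hle := measure_mono (μ := (volume : Measure ℝ)) hsub
    have hfin : volume {x : ℝ | f.IsRoot x} = 0 :=
      (Polynomial.finite_setOf_isRoot hf).measure_zero volume
    by_contra hc
    push_neg at hc
    have h0 : volume (Function.support
        (fun x : ℝ => f.eval x * f.eval x * Real.exp (-x ^ 4))) = 0 := le_antisymm hc zero_le
    have : volume (Set.univ : Set ℝ) ≤ 0 := by
      calc volume (Set.univ : Set ℝ)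
          ≤ volume ({x : ℝ | ¬ f.IsRoot x} ∪ {x : ℝ | f.IsRoot x}) := by
            apply measure_mono; intro x _; by_cases h : f.IsRoot x
            · exact Or.inr h
            · exact Or.inl h
        _ ≤ volume {x : ℝ | ¬ f.IsRoot x} + volume {x : ℝ | f.IsRoot x} := measure_union_le _ _
        _ ≤ 0 + 0 := by gcongr; exact le_trans hle (le_of_eq h0); exact le_of_eq hfin
        _ = 0 := by simp
    rw [Real.volume_univ] at this
    simp at this
  · intro x
    simp only [Pi.zero_apply]
    nlinarith [mul_self_nonneg (f.eval x), Real.exp_pos (-x ^ 4)]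
  · have := integrable_eval_exp (f * f)
    refine this.congr ?_
    filter_upwards with x; simp


lemma innerS0_eq (l1 : ℝ) (f g : Polynomial ℝ) :
    innerS l1 0 f g = innerF f g + l1 * f.eval 0 * g.eval 0 := by
  unfold innerS; ring

lemma bilin_sum_right (I : Polynomial ℝ → Polynomial ℝ → ℝ)
    (hadd : ∀ f g h, I f (g + h) = I f g + I f h)
    (hzero : ∀ f, I f 0 = 0)
    (p : Polynomial ℝ) (s : Finset ℕ) (g : ℕ → Polynomial ℝ) :
    I p (∑ i ∈ s, g i) = ∑ i ∈ s, I p (g i) := by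
  induction s using Finset.induction_on with
  | empty => simpa using hzero p
  | insert a s hi ih => rw [Finset.sum_insert hi, hadd, ih, Finset.sum_insert hi]

lemma orth_of_orth_pow (I : Polynomial ℝ → Polynomial ℝ → ℝ)
    (hadd : ∀ f g h, I f (g + h) = I f g + I f h)
    (hsmul : ∀ f r g, I f (C r * g) = r * I f g)
    {p : Polynomial ℝ} {n : ℕ} (h : ∀ m, m < n → I p (X ^ m) = 0)
    {q : Polynomial ℝ} (hq : q.degree < n) : I p q = 0 := by
  have hzero : ∀ f, I f 0 = 0 := by
    intro f; have := hsmul f 0 0; simpa using this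
  by_cases h0 : q = 0
  · simp [h0, hzero]
  · have hnd : q.natDegree < n := (Polynomial.natDegree_lt_iff_degree_lt h0).mpr hq
    rw [q.as_sum_range' n hnd, bilin_sum_right I hadd hzero]
    apply Finset.sum_eq_zero
    intro i hi
    rw [← Polynomial.C_mul_X_pow_eq_monomial, hsmul, h i (Finset.mem_range.mp hi), mul_zero]

section Family
variable (P : ℕ → Polynomial ℝ) (hPm : ∀ n, (P n).Monic) (hPd : ∀ n, (P n).natDegree = n)

include hPm hPd in
lemma mem_span_P : ∀ (q : Polynomial ℝ) (d : ℕ), q.degree < d →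
    q ∈ Submodule.span ℝ (P '' Set.Iio d) := by
  suffices H : ∀ (N : ℕ) (q : Polynomial ℝ), q.natDegree < N → ∀ d : ℕ, q.degree < d →
      q ∈ Submodule.span ℝ (P '' Set.Iio d) by
    intro q d hd
    exact H (q.natDegree + 1) q (lt_add_one _) d hd
  intro N
  induction N with
  | zero => intro q hq; omega
  | succ N ih =>
    intro q hq d hd
    by_cases h0 : q = 0
    · simp [h0]
    have hdeg : q.natDegree < d := (Polynomial.natDegree_lt_iff_degree_lt h0).mpr hd
    set e := q.natDegree with he
    have hPe0 : P e ≠ 0 := (hPm e).ne_zero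
    have hdegPe : (P e).degree = (e : WithBot ℕ) := by
      rw [Polynomial.degree_eq_natDegree hPe0, hPd e]
    have hlc : q.leadingCoeff ≠ 0 := Polynomial.leadingCoeff_ne_zero.mpr h0
    have hdq : q.degree = (C q.leadingCoeff * P e).degree := by
      rw [Polynomial.degree_C_mul hlc, hdegPe, Polynomial.degree_eq_natDegree h0]
    have hlceq : q.leadingCoeff = (C q.leadingCoeff * P e).leadingCoeff := by
      rw [Polynomial.leadingCoeff_mul, Polynomial.leadingCoeff_C, (hPm e).leadingCoeff, mul_one]
    have hr : (q - C q.leadingCoeff * P e).degree < q.degree :=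
      Polynomial.degree_sub_lt hdq h0 hlceq
    have hPe_mem : P e ∈ Submodule.span ℝ (P '' Set.Iio d) :=
      Submodule.subset_span ⟨e, hdeg, rfl⟩
    have hterm : C q.leadingCoeff * P e ∈ Submodule.span ℝ (P '' Set.Iio d) := by
      rw [← Polynomial.smul_eq_C_mul]
      exact Submodule.smul_mem _ _ hPe_mem
    have hrmem : q - C q.leadingCoeff * P e ∈ Submodule.span ℝ (P '' Set.Iio d) := by
      by_cases hr0 : q - C q.leadingCoeff * P e = 0
      · simp [hr0]
      · apply ih _ _ _ (lt_trans hr hd)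
        have : (q - C q.leadingCoeff * P e).natDegree < e := by
          have := hr
          rw [Polynomial.degree_eq_natDegree h0, ← he] at this
          exact (Polynomial.natDegree_lt_iff_degree_lt hr0).mpr this
        omega
    have : q = (q - C q.leadingCoeff * P e) + C q.leadingCoeff * P e := by ring
    rw [this]
    exact Submodule.add_mem _ hrmem hterm

include hPm hPd in
lemma fourier_eval (hPorth : ∀ n m : ℕ, m < n → innerF (P n) (X ^ m) = 0)
    (k : ℕ → ℝ) (hk : ∀ n, k n = innerF (P n) (P n)) :
    ∀ (q : Polynomial ℝ) (d : ℕ), q.degree < d →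
      q.eval 0 = ∑ j ∈ Finset.range d, (innerF q (P j) / k j) * (P j).eval 0 := by
  have hkpos : ∀ j, 0 < k j := fun j => (hk j) ▸ innerF_self_pos (hPm j).ne_zero
  have horthF : ∀ i j : ℕ, i ≠ j → innerF (P i) (P j) = 0 := by
    intro i j hij
    rcases lt_or_gt_of_ne hij with h | h
    · rw [innerF_comm]
      apply orth_of_orth_pow innerF innerF_add_right innerF_Cmul_right (hPorth j)
      rw [Polynomial.degree_eq_natDegree (hPm i).ne_zero, hPd i]
      exact_mod_cast h
    · apply orth_of_orth_pow innerF innerF_add_right innerF_Cmul_right (hPorth i)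
      rw [Polynomial.degree_eq_natDegree (hPm j).ne_zero, hPd j]
      exact_mod_cast h
  suffices H : ∀ (d : ℕ) (q : Polynomial ℝ), q ∈ Submodule.span ℝ (P '' Set.Iio d) →
      q.eval 0 = ∑ j ∈ Finset.range d, (innerF q (P j) / k j) * (P j).eval 0 by
    intro q d hd
    exact H d q (mem_span_P P hPm hPd q d hd)
  intro d q hmem
  induction hmem using Submodule.span_induction with
  | mem x hx =>
    obtain ⟨i, hi, rfl⟩ := hx
    rw [Finset.sum_eq_single i]
    · rw [← hk i, div_self (ne_of_gt (hkpos i)), one_mul]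
    · intro j hj hji
      rw [horthF i j (Ne.symm hji), zero_div, zero_mul]
    · intro hi'; exact absurd (Finset.mem_range.mpr hi) hi'
  | zero =>
    simp only [Polynomial.eval_zero]
    rw [Finset.sum_congr rfl (fun j _ => ?_), Finset.sum_const_zero]
    rw [innerF_comm, innerF_zero_right, zero_div, zero_mul]
  | add x y hx hy ihx ihy =>
    rw [Polynomial.eval_add, ihx, ihy, ← Finset.sum_add_distrib]
    apply Finset.sum_congr rfl
    intro j _
    rw [innerF_add_left]
    ring
  | smul r x hx ihx =>
    rw [Polynomial.smul_eq_C_mul, Polynomial.eval_mul, Polynomial.eval_C, ihx,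
      Finset.mul_sum]
    apply Finset.sum_congr rfl
    intro j _
    rw [innerF_Cmul_left]
    ring
end Family


lemma final_algebra (km kn kn1 kn2 c1 c2 c3 l1 p s khm kh2 : ℝ)
    (hkm : 0 < km) (hs : 0 < s) (hl1 : 0 ≤ l1)
    (hkn : kn = c1 * km) (hkn1 : kn1 = c2 * kn) (hkn2 : kn2 = c3 * kn1)
    (hknpos : 0 < kn) (hkn1pos : 0 < kn1) (hkn2pos : 0 < kn2)
    (hkhm : khm = km + l1 * (p / s) * p)
    (hkh2 : kh2 = kn1 + l1 * ((-c1 * p) / (s + l1 * (p ^ 2 / km))) * (-c1 * p)) :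
    c3 * c2 / (kn2 / kh2) + kn / khm = c2 + c1 := by
  have hc1 : 0 < c1 := by nlinarith
  have hc2 : 0 < c2 := by nlinarith
  have hc3 : 0 < c3 := by nlinarith
  have hS2pos : 0 < s + l1 * (p ^ 2 / km) := by
    have h0 : 0 ≤ l1 * (p ^ 2 / km) := by positivity
    linarith
  have hkhmpos : 0 < khm := by
    have he : l1 * (p / s) * p = l1 * (p ^ 2 / s) := by ring
    rw [hkhm, he]
    have h0 : 0 ≤ l1 * (p ^ 2 / s) := by positivity
    linarith
  have hkh2pos : 0 < kh2 := by
    have he : l1 * ((-c1 * p) / (s + l1 * (p ^ 2 / km))) * (-c1 * p)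
        = l1 * ((c1 * p) ^ 2 / (s + l1 * (p ^ 2 / km))) := by ring
    rw [hkh2, he]
    have h0 : 0 ≤ l1 * ((c1 * p) ^ 2 / (s + l1 * (p ^ 2 / km))) := by positivity
    linarith
  subst hkn2 hkn1 hkn hkhm hkh2
  have hT : (0:ℝ) < km * s + l1 * p ^ 2 := by positivity
  have e1 : s + l1 * (p ^ 2 / km) = (km * s + l1 * p ^ 2) / km := by
    rw [eq_div_iff (ne_of_gt hkm)]; field_simp
  have e2 : km + l1 * (p / s) * p = (km * s + l1 * p ^ 2) / s := by
    field_simp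
  rw [e1, e2]
  have e3 : c2 * (c1 * km) + l1 * (-c1 * p / ((km * s + l1 * p ^ 2) / km)) * (-c1 * p)
      = (c2 * c1 * km * (km * s + l1 * p ^ 2) + l1 * c1 ^ 2 * p ^ 2 * km) / (km * s + l1 * p ^ 2) := by
    field_simp
  rw [e3]
  have hnum : 0 < c2 * c1 * km * (km * s + l1 * p ^ 2) + l1 * c1 ^ 2 * p ^ 2 * km := by positivity
  field_simp
  ring


end SobolevFreudAux

/-- Case `λ₂ = 0`: with `a n = k n / k̂ (n-1)` and `c n` the Freud recurrence
coefficients, `c_{n+2} c_{n+1} / a_{n+2} + a_n = c_{n+1} + c_n` for all `n ≥ 1`. -/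
theorem sobolev_freud_a_identity
    (l1 : ℝ) (hl1 : 0 ≤ l1)
    (P Q : ℕ → Polynomial ℝ) (k khat : ℕ → ℝ)
    (hPmonic : ∀ n, (P n).Monic) (hPdeg : ∀ n, (P n).natDegree = n)
    (hPorth : ∀ n m : ℕ, m < n → innerF (P n) (X ^ m) = 0)
    (hQmonic : ∀ n, (Q n).Monic) (hQdeg : ∀ n, (Q n).natDegree = n)
    (hQorth : ∀ n m : ℕ, m < n → innerS l1 0 (Q n) (X ^ m) = 0)
    (hk : ∀ n, k n = innerF (P n) (P n))
    (hkhat : ∀ n, khat n = innerS l1 0 (Q n) (Q n))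
    (c : ℕ → ℝ) (hP0 : P 0 = 1) (hP1 : P 1 = X)
    (hrec : ∀ n, 1 ≤ n → X * P n = P (n + 1) + C (c n) * P (n - 1))
    (a : ℕ → ℝ) (ha : ∀ n, a n = k n / khat (n - 1)) :
    ∀ n, 1 ≤ n → c (n + 2) * c (n + 1) / a (n + 2) + a n = c (n + 1) + c n := by
  -- bilinearity of the Sobolev form
  have hSadd : ∀ f g h : Polynomial ℝ,
      innerS l1 0 f (g + h) = innerS l1 0 f g + innerS l1 0 f h := by
    intro f g h
    simp only [innerS0_eq, innerF_add_right, Polynomial.eval_add]; ring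
  have hSsmul : ∀ (f : Polynomial ℝ) (r : ℝ) (g : Polynomial ℝ),
      innerS l1 0 f (C r * g) = r * innerS l1 0 f g := by
    intro f r g
    simp only [innerS0_eq, innerF_Cmul_right, Polynomial.eval_mul, Polynomial.eval_C]; ring
  have hPdeg' : ∀ j : ℕ, (P j).degree = (j : WithBot ℕ) := fun j => by
    rw [Polynomial.degree_eq_natDegree (hPmonic j).ne_zero, hPdeg j]
  have hQdeg' : ∀ j : ℕ, (Q j).degree = (j : WithBot ℕ) := fun j => by
    rw [Polynomial.degree_eq_natDegree (hQmonic j).ne_zero, hQdeg j]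
  have hPg : ∀ (j : ℕ) (q : Polynomial ℝ), q.degree < (j : WithBot ℕ) → innerF (P j) q = 0 :=
    fun j q hq => orth_of_orth_pow innerF innerF_add_right innerF_Cmul_right (hPorth j) hq
  have hQg : ∀ (j : ℕ) (q : Polynomial ℝ), q.degree < (j : WithBot ℕ) →
      innerS l1 0 (Q j) q = 0 :=
    fun j q hq => orth_of_orth_pow (innerS l1 0) hSadd hSsmul (hQorth j) hq
  have hPPdeg : ∀ i j : ℕ, i < j → (P i).degree < (j : WithBot ℕ) := by
    intro i j hij; rw [hPdeg']; exact_mod_cast hij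
  have hkpos : ∀ m, 0 < k m := fun m => (hk m) ▸ innerF_self_pos (hPmonic m).ne_zero
  have hkhatpos : ∀ m, 0 < khat m := by
    intro m
    rw [hkhat m, innerS0_eq]
    have h1 := innerF_self_pos (hQmonic m).ne_zero
    nlinarith [mul_self_nonneg ((Q m).eval 0)]
  have hsub_deg : ∀ m : ℕ, (Q m - P m).degree < (m : WithBot ℕ) := by
    intro m
    have := Polynomial.degree_sub_lt (p := Q m) (q := P m) (by rw [hQdeg', hPdeg'])
      (hQmonic m).ne_zero (by rw [(hQmonic m).leadingCoeff, (hPmonic m).leadingCoeff])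
    rwa [hQdeg' m] at this
  have hkhat_eq : ∀ m, khat m = k m + l1 * (Q m).eval 0 * (P m).eval 0 := by
    intro m
    have hqp : Q m = P m + (Q m - P m) := by ring
    have h1 : innerS l1 0 (Q m) (Q m - P m) = 0 := hQg m _ (hsub_deg m)
    have h2 : innerF (P m) (Q m - P m) = 0 := hPg m _ (hsub_deg m)
    calc khat m = innerS l1 0 (Q m) (Q m) := hkhat m
      _ = innerS l1 0 (Q m) (P m) + innerS l1 0 (Q m) (Q m - P m) := by
          rw [← hSadd, ← hqp]
      _ = innerF (Q m) (P m) + l1 * (Q m).eval 0 * (P m).eval 0 := by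
          rw [h1, add_zero, innerS0_eq]
      _ = k m + l1 * (Q m).eval 0 * (P m).eval 0 := by
          rw [innerF_comm]
          have : innerF (P m) (Q m) = innerF (P m) (P m) + innerF (P m) (Q m - P m) := by
            rw [← innerF_add_right, ← hqp]
          rw [this, h2, add_zero, hk]
  -- recurrence for the norms
  have hck : ∀ m : ℕ, k (m + 1) = c (m + 1) * k m := by
    intro m
    have hr := hrec (m + 1) (by omega)
    simp only [Nat.add_sub_cancel] at hr
    have e1 : innerF (P (m + 1 + 1)) (P m) = 0 := hPg (m + 2) _ (hPPdeg m (m + 2) (by omega))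
    have e3 : innerF (X * P (m + 1)) (P m) = innerF (P (m + 1)) (X * P m) := by
      rw [innerF_mul_assoc, innerF_comm (P (m + 1)) (X * P m), innerF_mul_assoc,
        mul_comm (P m) (P (m + 1))]
    have e4 : innerF (P (m + 1)) (X * P m) = k (m + 1) := by
      match m with
      | 0 => rw [hP0, mul_one, ← hP1, ← hk]
      | t + 1 =>
        have hr2 := hrec (t + 1) (by omega)
        simp only [Nat.add_sub_cancel] at hr2
        rw [hr2, innerF_add_right, innerF_Cmul_right,
          hPg (t + 2) (P t) (hPPdeg t (t + 2) (by omega)), mul_zero, add_zero, hk]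
    have e5 := congrArg (fun p => innerF p (P m)) hr
    rw [innerF_add_left, innerF_Cmul_left, e1, e3, e4, zero_add, ← hk] at e5
    exact e5
  have hcval : ∀ m : ℕ, 0 < c (m + 1) := by
    intro m
    have := hck m
    have h1 := hkpos m
    have h2 := hkpos (m + 1)
    nlinarith
  -- evaluation recurrence at 0
  have hval0 : ∀ m : ℕ, (P (m + 2)).eval 0 = -c (m + 1) * (P m).eval 0 := by
    intro m
    have hr := hrec (m + 1) (by omega)
    simp only [Nat.add_sub_cancel] at hr
    have := congrArg (Polynomial.eval 0) hr
    simp only [Polynomial.eval_mul, Polynomial.eval_X, Polynomial.eval_add,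
      Polynomial.eval_C, zero_mul] at this
    linarith
  have hodd : ∀ t : ℕ, (P (2 * t + 1)).eval 0 = 0 := by
    intro t
    induction t with
    | zero => simp [hP1]
    | succ t ih =>
      have hidx : 2 * (t + 1) + 1 = (2 * t + 1) + 2 := by ring
      rw [hidx, hval0 (2 * t + 1), ih, mul_zero]
  -- the kernel-type evaluation identity
  have hQval : ∀ m : ℕ, (Q m).eval 0 *
      (1 + l1 * ∑ j ∈ Finset.range m, ((P j).eval 0) ^ 2 / k j) = (P m).eval 0 := by
    intro m
    have hq := fourier_eval P hPmonic hPdeg hPorth k hk (Q m - P m) m (hsub_deg m)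
    have hterm : ∀ j ∈ Finset.range m, innerF (Q m - P m) (P j) / k j * (P j).eval 0
        = (-(l1 * (Q m).eval 0)) * (((P j).eval 0) ^ 2 / k j) := by
      intro j hj
      have hj' := Finset.mem_range.mp hj
      have hdegj := hPPdeg j m hj'
      have h1 : innerF (P m) (P j) = 0 := hPg m _ hdegj
      have h2 : innerS l1 0 (Q m) (P j) = 0 := hQg m _ hdegj
      have h3 : innerF (Q m) (P j) = -(l1 * (Q m).eval 0 * (P j).eval 0) := by
        have h := innerS0_eq l1 (Q m) (P j)
        rw [h2] at h
        linarith
      have h4 : innerF (Q m - P m) (P j) = -(l1 * (Q m).eval 0 * (P j).eval 0) := by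
        have hse : Q m - P m = Q m + C (-1) * P m := by
          simp only [map_neg, map_one, neg_mul, one_mul]; ring
        rw [hse, innerF_add_left, innerF_Cmul_left, h1, h3]; ring
      rw [h4]
      field_simp
    rw [Finset.sum_congr rfl hterm, ← Finset.mul_sum] at hq
    simp only [Polynomial.eval_sub] at hq
    linear_combination hq
  have hSpos : ∀ m : ℕ,
      0 < 1 + l1 * ∑ j ∈ Finset.range m, ((P j).eval 0) ^ 2 / k j := by
    intro m
    have hsum : 0 ≤ ∑ j ∈ Finset.range m, ((P j).eval 0) ^ 2 / k j :=
      Finset.sum_nonneg fun j _ => div_nonneg (sq_nonneg _) (hkpos j).le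
    nlinarith
  -- main computation
  intro n hn
  obtain ⟨m, rfl⟩ : ∃ m, n = m + 1 := ⟨n - 1, by omega⟩
  rw [ha (m + 1 + 2), ha (m + 1)]
  show c (m + 3) * c (m + 2) / (k (m + 3) / khat (m + 1 + 2 - 1)) + k (m + 1) / khat (m + 1 - 1)
      = c (m + 2) + c (m + 1)
  have h1 : m + 1 + 2 - 1 = m + 2 := by omega
  have h2 : m + 1 - 1 = m := by omega
  rw [h1, h2]
  obtain ⟨hkhm, hkh2⟩ : khat m = k m + l1 * ((P m).eval 0 /
        (1 + l1 * ∑ j ∈ Finset.range m, ((P j).eval 0) ^ 2 / k j)) * (P m).eval 0 ∧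
      khat (m + 2) = k (m + 2) + l1 * ((-c (m + 1) * (P m).eval 0) /
        ((1 + l1 * ∑ j ∈ Finset.range m, ((P j).eval 0) ^ 2 / k j)
          + l1 * (((P m).eval 0) ^ 2 / k m))) * (-c (m + 1) * (P m).eval 0) := by
    rcases Nat.even_or_odd m with he | ho
    · obtain ⟨t, rfl⟩ := he
      have hPn0 : (P (t + t + 1)).eval 0 = 0 := by
        have := hodd t; rwa [show 2 * t + 1 = t + t + 1 by ring] at this
      have hQm : (Q (t + t)).eval 0 = (P (t + t)).eval 0 /
          (1 + l1 * ∑ j ∈ Finset.range (t + t), ((P j).eval 0) ^ 2 / k j) := by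
        rw [eq_div_iff (ne_of_gt (hSpos (t + t)))]
        exact hQval (t + t)
      have hS2eq : (1 + l1 * ∑ j ∈ Finset.range (t + t + 2), ((P j).eval 0) ^ 2 / k j)
          = (1 + l1 * ∑ j ∈ Finset.range (t + t), ((P j).eval 0) ^ 2 / k j)
            + l1 * (((P (t + t)).eval 0) ^ 2 / k (t + t)) := by
        rw [Finset.sum_range_succ, Finset.sum_range_succ, hPn0]
        ring
      have hS2pos : 0 < (1 + l1 * ∑ j ∈ Finset.range (t + t), ((P j).eval 0) ^ 2 / k j)
          + l1 * (((P (t + t)).eval 0) ^ 2 / k (t + t)) := by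
        rw [← hS2eq]; exact hSpos (t + t + 2)
      have hQ2 : (Q (t + t + 2)).eval 0 = (-c (t + t + 1) * (P (t + t)).eval 0) /
          ((1 + l1 * ∑ j ∈ Finset.range (t + t), ((P j).eval 0) ^ 2 / k j)
            + l1 * (((P (t + t)).eval 0) ^ 2 / k (t + t))) := by
        rw [eq_div_iff (ne_of_gt hS2pos), ← hS2eq, ← hval0 (t + t)]
        exact hQval (t + t + 2)
      exact ⟨by rw [hkhat_eq (t + t), hQm], by rw [hkhat_eq (t + t + 2), hQ2, hval0 (t + t)]⟩
    · obtain ⟨t, rfl⟩ := ho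
      have hp0 : (P (2 * t + 1)).eval 0 = 0 := hodd t
      have hp2 : (P (2 * t + 1 + 2)).eval 0 = 0 := by
        rw [hval0 (2 * t + 1), hp0, mul_zero]
      constructor
      · rw [hkhat_eq (2 * t + 1), hp0]; ring
      · rw [hkhat_eq (2 * t + 1 + 2), hp2, hp0]; ring
  exact final_algebra (k m) (k (m + 1)) (k (m + 2)) (k (m + 3)) (c (m + 1)) (c (m + 2))
    (c (m + 3)) l1 ((P m).eval 0)
    (1 + l1 * ∑ j ∈ Finset.range m, ((P j).eval 0) ^ 2 / k j) (khat m) (khat (m + 2))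
    (hkpos m) (hSpos m) hl1 (hck m) (hck (m + 1)) (hck (m + 2))
    (hkpos (m + 1)) (hkpos (m + 2)) (hkpos (m + 3)) hkhm hkh2
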